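/- Let L be a complete lattice with least element 0, ω₁ a **-closed down-set (ω₁** = ω₁) and ω₂ an arbitrary down-set in L. Then ω₁ ∩ ω₂** = (ω₁ ∩ ω₂)**. -/
import Mathlib


variable {L : Type*} [CompleteLattice L]

/-- A down-set containing the least element. -/
def IsDownSet (ω : Set L) : Prop :=
  ⊥ ∈ ω ∧ ∀ ⦃x y : L⦄, x ∈ ω → y ≤ x → y ∈ ω

/-- The pseudo-complement: the largest down-set whose intersection with ω is {⊥}. -/
def pcomp (ω : Set L) : Set L :=
  ⋃₀ {ω1 : Set L | IsDownSet ω1 ∧ ω ∩ ω1 = {⊥}}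

lemma pcomp_mp {ω : Set L} {x : L} (hx : x ∈ pcomp ω) :
    ∀ y ∈ ω, y ≤ x → y = ⊥ := by
  obtain ⟨ω1, ⟨hds, heq⟩, hx1⟩ := hx
  intro y hy hyx
  have : y ∈ ω ∩ ω1 := ⟨hy, hds.2 hx1 hyx⟩
  rwa [heq, Set.mem_singleton_iff] at this

lemma mem_pcomp {ω : Set L} (hb : ⊥ ∈ ω) {x : L} :
    x ∈ pcomp ω ↔ ∀ y ∈ ω, y ≤ x → y = ⊥ := by
  constructor
  · exact pcomp_mp
  · intro h
    refine ⟨Set.Iic x, ⟨⟨bot_le, fun a b ha hba => le_trans hba ha⟩, ?_⟩, le_refl x⟩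
    ext z
    constructor
    · rintro ⟨hz, hzx⟩; exact h z hz hzx
    · rintro rfl; exact ⟨hb, bot_le⟩

lemma bot_mem_pcomp {ω : Set L} (hb : ⊥ ∈ ω) : ⊥ ∈ pcomp ω :=
  (mem_pcomp hb).2 fun _ _ hle => le_bot_iff.1 hle

lemma pcomp_antitone {ω ω' : Set L} (hb : ⊥ ∈ ω) (h : ω ⊆ ω') :
    pcomp ω' ⊆ pcomp ω := fun _ hx =>
  (mem_pcomp hb).2 fun y hy hle => pcomp_mp hx y (h hy) hle

theorem closed_inter_double_pcomp (ω₁ ω₂ : Set L)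
    (h₁ : IsDownSet ω₁) (h₁c : pcomp (pcomp ω₁) = ω₁) (h₂ : IsDownSet ω₂) :
    ω₁ ∩ pcomp (pcomp ω₂) = pcomp (pcomp (ω₁ ∩ ω₂)) := by
  have hb12 : ⊥ ∈ ω₁ ∩ ω₂ := ⟨h₁.1, h₂.1⟩
  ext x
  constructor
  · rintro ⟨hx1, hx2⟩
    refine (mem_pcomp (bot_mem_pcomp hb12)).2 fun y hy hyx => ?_
    have hyω₁ : y ∈ ω₁ := h₁.2 hx1 hyx
    have hypc : y ∈ pcomp ω₂ :=
      (mem_pcomp h₂.1).2 fun z hz hzy =>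
        pcomp_mp hy z ⟨h₁.2 hyω₁ hzy, hz⟩ hzy
    exact pcomp_mp hx2 y hypc hyx
  · intro hx
    constructor
    · rw [← h₁c]
      exact pcomp_antitone (bot_mem_pcomp h₁.1)
        (pcomp_antitone hb12 Set.inter_subset_left) hx
    · exact pcomp_antitone (bot_mem_pcomp h₂.1)
        (pcomp_antitone hb12 Set.inter_subset_right) hx
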